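/- Let γ be the standard Gaussian measure on ℝ (mean 0, variance 1), and for h ∈ (0,1) set A_h = √(4 |ln h|) and clamp_{A_h}(x) = max(−A_h, min(A_h, x)). Then there exists a constant K > 0 such that for all h ∈ (0,1), 0 ≤ ∫_ℝ (√h·x)² dγ(x) − ∫_ℝ (√h·clamp_{A_h}(x))² dγ(x) ≤ K h³; i.e., |E((ΔŴ)²) − E((ΔW)²)| ≤ K h³ for the truncated increment ΔŴ = √h·clamp_{A_h}(ξ) and the Wiener increment ΔW = √h·ξ. -/

import Mathlib

open MeasureTheory ProbabilityTheory Real Set Filter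

noncomputable section SMTAux

/-- pdf formula -/
lemma smt_pdf_eq (x : ℝ) :
    gaussianPDFReal 0 1 x = (Real.sqrt (2 * Real.pi))⁻¹ * Real.exp (-x ^ 2 / 2) := by
  simp [gaussianPDFReal]

lemma smt_exp_integrable : Integrable (fun x : ℝ => Real.exp (-x ^ 2 / 2)) := by
  have h := integrable_exp_neg_mul_sq (b := (1/2 : ℝ)) (by norm_num)
  convert h using 2 with x
  ring_nf

lemma smt_sq_exp_integrable : Integrable (fun x : ℝ => x ^ 2 * Real.exp (-x ^ 2 / 2)) := by
  have h := integrable_rpow_mul_exp_neg_mul_sq (b := (1/2 : ℝ)) (by norm_num) (s := 2) (by norm_num)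
  have : ∀ x : ℝ, |x| ^ (2:ℝ) * Real.exp (-(1/2) * x ^ 2) = x ^ 2 * Real.exp (-x ^ 2 / 2) := by
    intro x
    rw [show ((2:ℝ)) = ((2:ℕ):ℝ) by norm_num, Real.rpow_natCast, sq_abs]
    ring_nf
  exact h.congr (Filter.Eventually.of_forall fun x => by simpa using this x)

lemma smt_tendsto1 : Tendsto (fun x : ℝ => x * Real.exp (-x ^ 2 / 2)) atTop (nhds 0) := by
  have h := rpow_mul_exp_neg_mul_sq_isLittleO_exp_neg (b := (1/2 : ℝ)) (by norm_num) 1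
  have hm : Tendsto (fun x : ℝ => (1/2 : ℝ) * x) atTop atTop :=
    tendsto_id.const_mul_atTop (by norm_num)
  have h2 : Tendsto (fun x : ℝ => Real.exp (-(1/2 : ℝ) * x)) atTop (nhds 0) := by
    have := Real.tendsto_exp_neg_atTop_nhds_zero.comp hm
    refine this.congr fun x => ?_
    simp [Function.comp, neg_mul]
  have h3 := h.isBigO.trans_tendsto h2
  refine h3.congr (fun x => ?_)
  rw [Real.rpow_one]
  ring_nf

lemma smt_deriv1 (x : ℝ) :
    HasDerivAt (fun x : ℝ => -(x * Real.exp (-x ^ 2 / 2)))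
      ((x ^ 2 - 1) * Real.exp (-x ^ 2 / 2)) x := by
  have he : HasDerivAt (fun x : ℝ => Real.exp (-x ^ 2 / 2))
      (Real.exp (-x ^ 2 / 2) * (-x)) x := by
    have hq : HasDerivAt (fun y : ℝ => -y ^ 2 / 2) (-x) x := by
      have hp := (hasDerivAt_pow 2 x).const_mul (-(1/2) : ℝ)
      have heq : (fun y : ℝ => (-(1/2) : ℝ) * y ^ 2) = fun y : ℝ => -y ^ 2 / 2 := by
        funext y; ring
      rw [heq] at hp
      refine hp.congr_deriv ?_
      push_cast; ring
    simpa [mul_comm] using hq.exp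
  have := ((hasDerivAt_id x).mul he).neg
  refine this.congr_deriv ?_
  simp only [id_eq]
  ring

lemma smt_I1 (A : ℝ) :
    ∫ x in Ioi A, (x ^ 2 - 1) * Real.exp (-x ^ 2 / 2) = A * Real.exp (-A ^ 2 / 2) := by
  have h := integral_Ioi_of_hasDerivAt_of_tendsto
    (f := fun x : ℝ => -(x * Real.exp (-x ^ 2 / 2)))
    (f' := fun x : ℝ => (x ^ 2 - 1) * Real.exp (-x ^ 2 / 2)) (a := A) (m := 0)
    ?_ (fun x _ => smt_deriv1 x) ?_ ?_
  · rw [h]; ring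
  · exact ((smt_deriv1 A).continuousAt).continuousWithinAt
  · refine (Integrable.integrableOn ?_)
    have := smt_sq_exp_integrable.sub smt_exp_integrable
    refine this.congr (Filter.Eventually.of_forall fun x => ?_)
    simp only [Pi.sub_apply]
    ring
  · simpa using smt_tendsto1.neg

def smtE (x : ℝ) : ℝ :=
  Real.exp (-x ^ 2 / 2) * ((1 - x ^ 2) / (1 + x ^ 2) ^ 2 - x ^ 2 / (1 + x ^ 2))

lemma smt_deriv2 (x : ℝ) :
    HasDerivAt (fun x : ℝ => x / (1 + x ^ 2) * Real.exp (-x ^ 2 / 2)) (smtE x) x := by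
  have hne : (1 + x ^ 2) ≠ 0 := by positivity
  have hq : HasDerivAt (fun x : ℝ => x / (1 + x ^ 2))
      ((1 * (1 + x ^ 2) - x * (2 * x)) / (1 + x ^ 2) ^ 2) x := by
    have h1 : HasDerivAt (fun x : ℝ => x) 1 x := hasDerivAt_id x
    have h2 : HasDerivAt (fun x : ℝ => 1 + x ^ 2) (2 * x) x := by
      simpa using (hasDerivAt_pow 2 x).const_add 1
    exact h1.div h2 hne
  have he : HasDerivAt (fun x : ℝ => Real.exp (-x ^ 2 / 2))
      (Real.exp (-x ^ 2 / 2) * (-x)) x := by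
    have hq2 : HasDerivAt (fun y : ℝ => -y ^ 2 / 2) (-x) x := by
      have hp := (hasDerivAt_pow 2 x).const_mul (-(1/2) : ℝ)
      have heq : (fun y : ℝ => (-(1/2) : ℝ) * y ^ 2) = fun y : ℝ => -y ^ 2 / 2 := by
        funext y; ring
      rw [heq] at hp
      refine hp.congr_deriv ?_
      push_cast; ring
    simpa [mul_comm] using hq2.exp
  have := hq.mul he
  refine this.congr_deriv ?_
  unfold smtE
  field_simp
  ring

lemma smt_absE (x : ℝ) : |smtE x| ≤ Real.exp (-x ^ 2 / 2) := by
  have hpos : (0:ℝ) < 1 + x ^ 2 := by positivity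
  have hexp : (0:ℝ) < Real.exp (-x ^ 2 / 2) := Real.exp_pos _
  unfold smtE
  rw [abs_mul, abs_of_pos hexp]
  have : |((1 - x ^ 2) / (1 + x ^ 2) ^ 2 - x ^ 2 / (1 + x ^ 2))| ≤ 1 := by
    rw [abs_le]
    constructor
    · rw [div_sub_div _ _ (by positivity) hpos.ne', le_div_iff₀ (by positivity)]
      nlinarith [sq_nonneg x, sq_nonneg (x^2)]
    · rw [div_sub_div _ _ (by positivity) hpos.ne', div_le_iff₀ (by positivity)]
      nlinarith [sq_nonneg x, sq_nonneg (x^2)]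
  nlinarith [hexp.le]

lemma smt_tendsto2 :
    Tendsto (fun x : ℝ => x / (1 + x ^ 2) * Real.exp (-x ^ 2 / 2)) atTop (nhds 0) := by
  have hb : ∀ x : ℝ, 0 ≤ x → x / (1 + x ^ 2) * Real.exp (-x ^ 2 / 2) ≤ x * Real.exp (-x ^ 2 / 2) := by
    intro x hx
    have h1 : x / (1 + x ^ 2) ≤ x := by
      rw [div_le_iff₀ (by positivity)]
      nlinarith [sq_nonneg x]
    exact mul_le_mul_of_nonneg_right h1 (Real.exp_pos _).le
  refine squeeze_zero' ?_ ?_ smt_tendsto1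
  · filter_upwards [eventually_ge_atTop (0:ℝ)] with x hx
    positivity
  · filter_upwards [eventually_ge_atTop (0:ℝ)] with x hx
    exact hb x hx

lemma smt_I2_low {A : ℝ} (hA : 0 ≤ A) :
    A / (1 + A ^ 2) * Real.exp (-A ^ 2 / 2) ≤ ∫ x in Ioi A, Real.exp (-x ^ 2 / 2) := by
  have hint : IntegrableOn (fun x : ℝ => -smtE x) (Ioi A) := by
    refine (Integrable.integrableOn ?_)
    refine smt_exp_integrable.mono' ?_ (Filter.Eventually.of_forall fun x => ?_)
    · refine Measurable.aestronglyMeasurable ?_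
      unfold smtE
      fun_prop
    · rw [norm_neg, Real.norm_eq_abs]
      exact smt_absE x
  have h := integral_Ioi_of_hasDerivAt_of_tendsto
    (f := fun x : ℝ => -(x / (1 + x ^ 2) * Real.exp (-x ^ 2 / 2)))
    (f' := fun x : ℝ => -smtE x) (a := A) (m := 0)
    ((smt_deriv2 A).neg.continuousAt).continuousWithinAt
    (fun x _ => (smt_deriv2 x).neg) hint (by simpa using smt_tendsto2.neg)
  have h2 : ∫ x in Ioi A, -smtE x = A / (1 + A ^ 2) * Real.exp (-A ^ 2 / 2) := by
    rw [h]; ring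
  rw [← h2]
  refine setIntegral_mono_on hint smt_exp_integrable.integrableOn measurableSet_Ioi ?_
  intro x _
  have := smt_absE x
  have := abs_le.1 this
  linarith [this.1]

lemma smt_exp_int_le (A : ℝ) : ∫ x in Ioi A, Real.exp (-x ^ 2 / 2) ≤ 3 := by
  have h1 : ∫ x in Ioi A, Real.exp (-x ^ 2 / 2) ≤ ∫ x : ℝ, Real.exp (-x ^ 2 / 2) :=
    setIntegral_le_integral smt_exp_integrable
      (Filter.Eventually.of_forall fun x => (Real.exp_pos _).le)
  have h2 : ∫ x : ℝ, Real.exp (-x ^ 2 / 2) = Real.sqrt (Real.pi / (1/2)) := by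
    rw [← integral_gaussian (1/2 : ℝ)]
    congr 1 with x
    ring_nf
  have h3 : Real.sqrt (Real.pi / (1/2)) ≤ 3 := by
    rw [show (3:ℝ) = Real.sqrt 9 by rw [show (9:ℝ) = 3^2 by norm_num, Real.sqrt_sq]; norm_num]
    exact Real.sqrt_le_sqrt (by nlinarith [Real.pi_le_four])
  linarith

end SMTAux
section SMTAux2

lemma smt_tail_integrable (A : ℝ) :
    IntegrableOn (fun x : ℝ => (x ^ 2 - A ^ 2) * Real.exp (-x ^ 2 / 2)) (Ioi A) := by
  have h := smt_sq_exp_integrable.sub (smt_exp_integrable.const_mul (A ^ 2))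
  refine (h.congr (Filter.Eventually.of_forall fun x => ?_)).integrableOn
  simp only [Pi.sub_apply]
  ring

lemma smt_T_eq (A : ℝ) :
    ∫ x in Ioi A, (x ^ 2 - A ^ 2) * Real.exp (-x ^ 2 / 2)
      = A * Real.exp (-A ^ 2 / 2) + (1 - A ^ 2) * ∫ x in Ioi A, Real.exp (-x ^ 2 / 2) := by
  have hi1 : IntegrableOn (fun x : ℝ => (x ^ 2 - 1) * Real.exp (-x ^ 2 / 2)) (Ioi A) := by
    have h := smt_sq_exp_integrable.sub smt_exp_integrable
    refine (h.congr (Filter.Eventually.of_forall fun x => ?_)).integrableOn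
    simp only [Pi.sub_apply]; ring
  have hi2 : IntegrableOn (fun x : ℝ => (1 - A ^ 2) * Real.exp (-x ^ 2 / 2)) (Ioi A) :=
    (smt_exp_integrable.const_mul _).integrableOn
  have heq : ∀ x : ℝ, (x ^ 2 - A ^ 2) * Real.exp (-x ^ 2 / 2)
      = (x ^ 2 - 1) * Real.exp (-x ^ 2 / 2) + (1 - A ^ 2) * Real.exp (-x ^ 2 / 2) := by
    intro x; ring
  rw [setIntegral_congr_fun measurableSet_Ioi (fun x _ => heq x), integral_add hi1 hi2,
    smt_I1 A, integral_const_mul]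

lemma smt_T_bound1 {A : ℝ} (hA : 1 ≤ A) :
    ∫ x in Ioi A, (x ^ 2 - A ^ 2) * Real.exp (-x ^ 2 / 2) ≤ Real.exp (-A ^ 2 / 2) := by
  rw [smt_T_eq A]
  have hA0 : (0:ℝ) ≤ A := by linarith
  have h2 := smt_I2_low hA0
  have hnp : 1 - A ^ 2 ≤ 0 := by nlinarith
  have h3 : (1 - A ^ 2) * ∫ x in Ioi A, Real.exp (-x ^ 2 / 2)
      ≤ (1 - A ^ 2) * (A / (1 + A ^ 2) * Real.exp (-A ^ 2 / 2)) :=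
    mul_le_mul_of_nonpos_left h2 hnp
  have hexp : (0:ℝ) < Real.exp (-A ^ 2 / 2) := Real.exp_pos _
  have hden : (0:ℝ) < 1 + A ^ 2 := by positivity
  have h4 : A + (1 - A ^ 2) * A / (1 + A ^ 2) ≤ 1 := by
    have heq : 1 - (A + (1 - A ^ 2) * A / (1 + A ^ 2))
        = ((1 + A ^ 2) - A * (1 + A ^ 2) - (1 - A ^ 2) * A) / (1 + A ^ 2) := by
      field_simp
      ring
    rw [← sub_nonneg, heq]
    apply div_nonneg _ hden.le
    nlinarith
  have key := mul_le_mul_of_nonneg_right h4 hexp.le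
  have expand : (A + (1 - A ^ 2) * A / (1 + A ^ 2)) * Real.exp (-A ^ 2 / 2)
      = A * Real.exp (-A ^ 2 / 2)
        + (1 - A ^ 2) * (A / (1 + A ^ 2) * Real.exp (-A ^ 2 / 2)) := by ring
  rw [expand, one_mul] at key
  linarith

lemma smt_T_bound2 {A : ℝ} (h0 : 0 ≤ A) (hA : A ≤ 1) :
    ∫ x in Ioi A, (x ^ 2 - A ^ 2) * Real.exp (-x ^ 2 / 2) ≤ 4 := by
  rw [smt_T_eq A]
  have h1 : A * Real.exp (-A ^ 2 / 2) ≤ 1 := by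
    have : Real.exp (-A ^ 2 / 2) ≤ 1 := Real.exp_le_one_iff.2 (by nlinarith)
    nlinarith
  have h2 : (0:ℝ) ≤ ∫ x in Ioi A, Real.exp (-x ^ 2 / 2) :=
    setIntegral_nonneg measurableSet_Ioi fun x _ => (Real.exp_pos _).le
  have h3 := smt_exp_int_le A
  have hc : 0 ≤ 1 - A ^ 2 := by nlinarith
  nlinarith

lemma smt_W_eq {A : ℝ} (hA : 0 ≤ A) (x : ℝ) :
    max (x ^ 2 - A ^ 2) 0 * Real.exp (-x ^ 2 / 2)
      = Set.indicator (Ioi A) (fun y => (y ^ 2 - A ^ 2) * Real.exp (-y ^ 2 / 2)) x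
        + Set.indicator (Ioi A) (fun y => (y ^ 2 - A ^ 2) * Real.exp (-y ^ 2 / 2)) (-x) := by
  rcases lt_or_ge A x with hx | hx
  · have h1 : x ∈ Ioi A := hx
    have h2 : -x ∉ Ioi A := by simp only [mem_Ioi]; push_neg; linarith
    rw [Set.indicator_of_mem h1, Set.indicator_of_notMem h2]
    have : max (x ^ 2 - A ^ 2) 0 = x ^ 2 - A ^ 2 := max_eq_left (by nlinarith)
    rw [this]; ring
  · have h1 : x ∉ Ioi A := notMem_Ioi.2 hx
    rcases le_or_gt (-x) A with hx2 | hx2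
    · have h2 : -x ∉ Ioi A := notMem_Ioi.2 hx2
      rw [Set.indicator_of_notMem h1, Set.indicator_of_notMem h2]
      have : max (x ^ 2 - A ^ 2) 0 = 0 := max_eq_right (by nlinarith)
      rw [this]; ring
    · have h2 : -x ∈ Ioi A := hx2
      rw [Set.indicator_of_notMem h1, Set.indicator_of_mem h2]
      have : max (x ^ 2 - A ^ 2) 0 = x ^ 2 - A ^ 2 := max_eq_left (by nlinarith)
      rw [this, neg_pow]
      ring_nf

end SMTAux2

section SMTAux3

lemma smt_integral_neg (f : ℝ → ℝ) : ∫ x : ℝ, f (-x) = ∫ x : ℝ, f x := by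
  have h := MeasureTheory.integral_map_equiv (μ := (volume : Measure ℝ))
    (MeasurableEquiv.neg ℝ) f
  have hm : Measure.map (⇑(MeasurableEquiv.neg ℝ)) (volume : Measure ℝ) = volume := by
    rw [show ⇑(MeasurableEquiv.neg ℝ) = (fun x : ℝ => -x) from rfl]
    exact Measure.map_neg_eq_self (volume : Measure ℝ)
  rw [hm] at h
  exact h.symm

lemma smt_integrable_neg {f : ℝ → ℝ} (hf : Integrable f (volume : Measure ℝ)) :
    Integrable (fun x : ℝ => f (-x)) (volume : Measure ℝ) := by
  have h := (MeasureTheory.integrable_map_equiv (μ := (volume : Measure ℝ))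
    (MeasurableEquiv.neg ℝ) f).mp
  have hm : Measure.map (⇑(MeasurableEquiv.neg ℝ)) (volume : Measure ℝ) = volume := by
    rw [show ⇑(MeasurableEquiv.neg ℝ) = (fun x : ℝ => -x) from rfl]
    exact Measure.map_neg_eq_self (volume : Measure ℝ)
  rw [hm] at h
  exact h hf

lemma smt_intW {A : ℝ} (hA : 0 ≤ A) :
    ∫ x : ℝ, max (x ^ 2 - A ^ 2) 0 * Real.exp (-x ^ 2 / 2)
      = 2 * ∫ x in Ioi A, (x ^ 2 - A ^ 2) * Real.exp (-x ^ 2 / 2) := by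
  set G : ℝ → ℝ := Set.indicator (Ioi A) (fun y => (y ^ 2 - A ^ 2) * Real.exp (-y ^ 2 / 2))
  have hGint : Integrable G (volume : Measure ℝ) :=
    (smt_tail_integrable A).integrable_indicator measurableSet_Ioi
  have hGnegint : Integrable (fun x => G (-x)) (volume : Measure ℝ) := smt_integrable_neg hGint
  calc ∫ x : ℝ, max (x ^ 2 - A ^ 2) 0 * Real.exp (-x ^ 2 / 2)
      = ∫ x : ℝ, (G x + G (-x)) := by
        congr 1 with x
        exact smt_W_eq hA x
    _ = (∫ x : ℝ, G x) + ∫ x : ℝ, G (-x) := integral_add hGint hGnegint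
    _ = 2 * ∫ x : ℝ, G x := by rw [smt_integral_neg G]; ring
    _ = 2 * ∫ x in Ioi A, (x ^ 2 - A ^ 2) * Real.exp (-x ^ 2 / 2) := by
        rw [integral_indicator measurableSet_Ioi]

lemma smt_gauss_density :
    gaussianReal 0 1
      = (volume : Measure ℝ).withDensity
          (fun x => ((gaussianPDFReal 0 1 x).toNNReal : ENNReal)) := by
  rw [gaussianReal_of_var_ne_zero 0 one_ne_zero]
  rfl

lemma smt_integral_gauss (f : ℝ → ℝ) :
    ∫ x, f x ∂(gaussianReal 0 1) = ∫ x, gaussianPDFReal 0 1 x * f x := by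
  rw [smt_gauss_density,
    integral_withDensity_eq_integral_smul
      (f := fun x => (gaussianPDFReal 0 1 x).toNNReal)
      ((measurable_gaussianPDFReal 0 1).real_toNNReal) f]
  congr 1 with x
  simp [NNReal.smul_def, Real.coe_toNNReal _ (gaussianPDFReal_nonneg 0 1 x)]

lemma smt_integrable_gauss_iff (f : ℝ → ℝ) :
    Integrable f (gaussianReal 0 1)
      ↔ Integrable (fun x => gaussianPDFReal 0 1 x * f x) (volume : Measure ℝ) := by
  rw [smt_gauss_density,
    integrable_withDensity_iff_integrable_smul
      ((measurable_gaussianPDFReal 0 1).real_toNNReal)]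
  constructor <;> intro h <;> refine h.congr (Filter.Eventually.of_forall fun x => ?_) <;>
    simp [NNReal.smul_def, Real.coe_toNNReal _ (gaussianPDFReal_nonneg 0 1 x)]

lemma smt_clamp_sq {A : ℝ} (hA : 0 ≤ A) (x : ℝ) :
    (max (-A) (min A x)) ^ 2 = x ^ 2 - max (x ^ 2 - A ^ 2) 0 := by
  rcases le_total x (-A) with h | h
  · have h1 : min A x = x := min_eq_right (by linarith)
    have h2 : max (-A) x = -A := max_eq_left h
    rw [h1, h2]
    have : max (x ^ 2 - A ^ 2) 0 = x ^ 2 - A ^ 2 := max_eq_left (by nlinarith)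
    rw [this]; ring
  · rcases le_total x A with h3 | h3
    · have h1 : min A x = x := min_eq_right h3
      have h2 : max (-A) x = x := max_eq_right h
      rw [h1, h2]
      have : max (x ^ 2 - A ^ 2) 0 = 0 := max_eq_right (by nlinarith)
      rw [this]; ring
    · have h1 : min A x = A := min_eq_left h3
      have h2 : max (-A) A = A := max_eq_right (by linarith)
      rw [h1, h2]
      have : max (x ^ 2 - A ^ 2) 0 = x ^ 2 - A ^ 2 := max_eq_left (by nlinarith)
      rw [this]; ring

end SMTAux3

/-- Second moments of Wiener increments and their truncations. With
`A_h = √(4|ln h|)` and `clamp_A(x) = max(−A, min(A, x))`, there is `K > 0` such that for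
all `h ∈ (0,1)`,
`0 ≤ ∫ (√h·x)² dγ − ∫ (√h·clamp_{A_h}(x))² dγ ≤ K h³`. -/
theorem second_moment_truncation_error
    : ∃ K : ℝ, 0 < K ∧ ∀ h ∈ Set.Ioo (0:ℝ) 1,
      0 ≤ (∫ x, (Real.sqrt h * x) ^ 2 ∂(gaussianReal 0 1))
          - ∫ x, (Real.sqrt h * max (-(Real.sqrt (4 * |Real.log h|)))
              (min (Real.sqrt (4 * |Real.log h|)) x)) ^ 2 ∂(gaussianReal 0 1) ∧
        (∫ x, (Real.sqrt h * x) ^ 2 ∂(gaussianReal 0 1))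
          - (∫ x, (Real.sqrt h * max (-(Real.sqrt (4 * |Real.log h|)))
              (min (Real.sqrt (4 * |Real.log h|)) x)) ^ 2 ∂(gaussianReal 0 1))
          ≤ K * h ^ 3 := by
  refine ⟨16, by norm_num, ?_⟩
  rintro h ⟨h0, h1⟩
  set A : ℝ := Real.sqrt (4 * |Real.log h|) with hAdef
  have hA0 : 0 ≤ A := Real.sqrt_nonneg _
  have hA2 : A ^ 2 = 4 * |Real.log h| := Real.sq_sqrt (by positivity)
  have hlog : Real.log h < 0 := Real.log_neg h0 h1
  have hexp2 : Real.exp (-A ^ 2 / 2) = h ^ 2 := by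
    rw [hA2, abs_of_neg hlog]
    rw [show -(4 * -Real.log h) / 2 = Real.log h + Real.log h by ring,
      Real.exp_add, Real.exp_log h0]
    ring
  have hc0 : (0:ℝ) < Real.sqrt (2 * Real.pi) := Real.sqrt_pos.2 (by positivity)
  have hc1 : (Real.sqrt (2 * Real.pi))⁻¹ ≤ 1 := by
    have h2 : (1:ℝ) ≤ Real.sqrt (2 * Real.pi) := by
      rw [show (1:ℝ) = Real.sqrt 1 by simp]
      exact Real.sqrt_le_sqrt (by nlinarith [Real.pi_gt_three])
    exact inv_le_one_of_one_le₀ h2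
  have hint_sq : Integrable (fun x : ℝ => x ^ 2) (gaussianReal 0 1) := by
    rw [smt_integrable_gauss_iff]
    refine (smt_sq_exp_integrable.const_mul ((Real.sqrt (2 * Real.pi))⁻¹)).congr
      (Filter.Eventually.of_forall fun x => ?_)
    simp only [smt_pdf_eq]; ring
  have hclamp_cont : Continuous (fun x : ℝ => (max (-A) (min A x)) ^ 2) :=
    (continuous_const.max (continuous_const.min continuous_id)).pow 2
  have hint_clamp : Integrable (fun x : ℝ => (max (-A) (min A x)) ^ 2) (gaussianReal 0 1) := by
    refine Integrable.mono' (integrable_const (A ^ 2)) hclamp_cont.aestronglyMeasurable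
      (Filter.Eventually.of_forall fun x => ?_)
    rw [Real.norm_eq_abs, abs_of_nonneg (sq_nonneg _)]
    exact sq_le_sq' (le_max_left _ _) (max_le (by linarith) (min_le_left _ _))
  have hF_nonneg : 0 ≤ ∫ x, max (x ^ 2 - A ^ 2) 0 ∂(gaussianReal 0 1) :=
    integral_nonneg fun x => le_max_right _ _
  have hFval : ∫ x, max (x ^ 2 - A ^ 2) 0 ∂(gaussianReal 0 1)
      = (Real.sqrt (2 * Real.pi))⁻¹
        * (2 * ∫ x in Ioi A, (x ^ 2 - A ^ 2) * Real.exp (-x ^ 2 / 2)) := by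
    rw [smt_integral_gauss]
    calc ∫ x : ℝ, gaussianPDFReal 0 1 x * max (x ^ 2 - A ^ 2) 0
        = ∫ x : ℝ, (Real.sqrt (2 * Real.pi))⁻¹
            * (max (x ^ 2 - A ^ 2) 0 * Real.exp (-x ^ 2 / 2)) := by
          congr 1 with x; simp only [smt_pdf_eq]; ring
      _ = (Real.sqrt (2 * Real.pi))⁻¹
            * ∫ x : ℝ, max (x ^ 2 - A ^ 2) 0 * Real.exp (-x ^ 2 / 2) :=
          integral_const_mul _ _
      _ = _ := by rw [smt_intW hA0]
  have hFbound : ∫ x, max (x ^ 2 - A ^ 2) 0 ∂(gaussianReal 0 1) ≤ 16 * h ^ 2 := by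
    rw [hFval]
    rcases le_or_gt 1 A with hA1 | hA1
    · have hT := smt_T_bound1 hA1
      have hstep : (Real.sqrt (2 * Real.pi))⁻¹
          * (2 * ∫ x in Ioi A, (x ^ 2 - A ^ 2) * Real.exp (-x ^ 2 / 2))
          ≤ (Real.sqrt (2 * Real.pi))⁻¹ * (2 * Real.exp (-A ^ 2 / 2)) :=
        mul_le_mul_of_nonneg_left (by linarith) (by positivity)
      have hstep2 : (Real.sqrt (2 * Real.pi))⁻¹ * (2 * Real.exp (-A ^ 2 / 2))
          ≤ 2 * Real.exp (-A ^ 2 / 2) := by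
        have := Real.exp_pos (-A ^ 2 / 2)
        nlinarith
      rw [hexp2] at hstep2
      nlinarith [sq_nonneg h]
    · have hT := smt_T_bound2 hA0 hA1.le
      have hstep : (Real.sqrt (2 * Real.pi))⁻¹
          * (2 * ∫ x in Ioi A, (x ^ 2 - A ^ 2) * Real.exp (-x ^ 2 / 2))
          ≤ (Real.sqrt (2 * Real.pi))⁻¹ * (2 * 4) :=
        mul_le_mul_of_nonneg_left (by linarith) (by positivity)
      have hstep2 : (Real.sqrt (2 * Real.pi))⁻¹ * (2 * 4) ≤ 8 := by nlinarith
      have hh2 : (1:ℝ)/2 ≤ h ^ 2 := by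
        have := Real.add_one_le_exp (-A ^ 2 / 2)
        have hA2' : A ^ 2 ≤ 1 := by nlinarith
        rw [hexp2] at this
        linarith
      linarith
  have hsq : Real.sqrt h ^ 2 = h := Real.sq_sqrt h0.le
  have e1 : (∫ x, (Real.sqrt h * x) ^ 2 ∂(gaussianReal 0 1))
      = h * ∫ x, x ^ 2 ∂(gaussianReal 0 1) := by
    rw [← integral_const_mul]
    congr 1 with x
    rw [mul_pow, hsq]
  have e2 : (∫ x, (Real.sqrt h * max (-A) (min A x)) ^ 2 ∂(gaussianReal 0 1))
      = h * ∫ x, (max (-A) (min A x)) ^ 2 ∂(gaussianReal 0 1) := by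
    rw [← integral_const_mul]
    congr 1 with x
    rw [mul_pow, hsq]
  have e3 : (∫ x, x ^ 2 ∂(gaussianReal 0 1))
        - ∫ x, (max (-A) (min A x)) ^ 2 ∂(gaussianReal 0 1)
      = ∫ x, max (x ^ 2 - A ^ 2) 0 ∂(gaussianReal 0 1) := by
    rw [← integral_sub hint_sq hint_clamp]
    congr 1 with x
    rw [smt_clamp_sq hA0 x]
    ring
  rw [e1, e2, ← mul_sub, e3]
  constructor
  · exact mul_nonneg h0.le hF_nonneg
  · have := mul_le_mul_of_nonneg_left hFbound h0.le
    nlinarith
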